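/- Let a, b, c, d ∈ ℂ and n ∈ ℕ, and let W̃_n(x | a,b,c,d) denote the rescaled Wilson polynomial, a polynomial in x². Then for every x ∈ ℂ with x(x−1)(x+1) ≠ 0, (μ*^{(a,b,c,d)}(μ^{(a,b,c,d)} W̃_n(·|a,b,c,d)))(x) = [n(n+a+b+c+d−1) + (c+d)(a+b−1)]·W̃_n(x|a,b,c,d). That is, the rescaled Wilson polynomials are eigenfunctions of Q = μ*^{(a,b,c,d)}μ^{(a,b,c,d)} with eigenvalue n(n+a+b+c+d−1) + (c+d)(a+b−1) = (n+a+b−1)(n+c+d). -/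

import Mathlib

noncomputable section

/-- The S–Heun lowering operator L on the quadratic grid λ_x = x². -/
def opL (f : ℂ → ℂ) : ℂ → ℂ := fun x => (f (x + 1) - f (x - 1)) / (4 * x)

/-- The stabilizing S–Heun operator M₁ on the quadratic grid. -/
def opM1 (f : ℂ → ℂ) : ℂ → ℂ :=
  fun x => ((2 * x - 1) * f (x + 1) + (2 * x + 1) * f (x - 1)) / (4 * x)

/-- The stabilizing S–Heun operator M₂ on the quadratic grid. -/
def opM2 (f : ℂ → ℂ) : ℂ → ℂ :=
  fun x => ((x ^ 2 + (x - 1) ^ 2) * f (x + 1) - ((x + 1) ^ 2 + x ^ 2) * f (x - 1)) / (4 * x)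

/-- The raising S–Heun operator R₁ = λ_x M₁ on the quadratic grid. -/
def opR1 (f : ℂ → ℂ) : ℂ → ℂ := fun x => x ^ 2 * opM1 f x

/-- The raising S–Heun operator R₂ = λ_x M₂ on the quadratic grid. -/
def opR2 (f : ℂ → ℂ) : ℂ → ℂ := fun x => x ^ 2 * opM2 f x

/-- The contiguity operator μ^{(a,b,c,d)} = uL + vM₁ + ½M₂,
u = ((4a−1)(4b−1)−1)/4, v = a+b−½. -/
def opMu (a b c d : ℂ) (f : ℂ → ℂ) : ℂ → ℂ :=
  fun x => (((4 * a - 1) * (4 * b - 1) - 1) / 4) * opL f x + (a + b - 1 / 2) * opM1 f x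
    + (1 / 2) * opM2 f x

/-- The contiguity operator μ*^{(a,b,c,d)} = μ^{(c+½,d+½,a−½,b−½)}. -/
def opMuStar (a b c d : ℂ) : (ℂ → ℂ) → ℂ → ℂ :=
  opMu (c + 1 / 2) (d + 1 / 2) (a - 1 / 2) (b - 1 / 2)

/-- The rescaled Wilson polynomial W̃_n(x | a,b,c,d) = W_n(−x²/4 | a,b,c,d),
as a function of x. -/
def wilsonT (n : ℕ) (a b c d x : ℂ) : ℂ :=
  (ascPochhammer ℂ n).eval (a + b) * (ascPochhammer ℂ n).eval (a + c) *
    (ascPochhammer ℂ n).eval (a + d) *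
    ∑ k ∈ Finset.range (n + 1),
      ((ascPochhammer ℂ k).eval (-(n : ℂ)) *
          (ascPochhammer ℂ k).eval ((n : ℂ) + a + b + c + d - 1) /
          ((ascPochhammer ℂ k).eval (a + b) * (ascPochhammer ℂ k).eval (a + c) *
            (ascPochhammer ℂ k).eval (a + d) * (Nat.factorial k : ℂ))) *
        ∏ j ∈ Finset.range k, ((a + (j : ℂ)) ^ 2 - x ^ 2 / 4)

/-! ### Auxiliary definitions and lemmas -/

def pE (k : ℕ) (z : ℂ) : ℂ := (ascPochhammer ℂ k).eval z

def cW (n : ℕ) (a b c d : ℂ) (k : ℕ) : ℂ :=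
  pE k (-(n:ℂ)) * pE k ((n:ℂ) + a + b + c + d - 1) /
    (pE k (a+b) * pE k (a+c) * pE k (a+d) * (Nat.factorial k : ℂ))

def VW (n : ℕ) (a b c d x : ℂ) (k : ℕ) : ℂ :=
  -(16*x*(x+1)*(x-1)) * (k:ℂ) * cW n a b c d k *
    ((a+b+(k:ℂ)-1)*(a+c+(k:ℂ)-1)*(a+d+(k:ℂ)-1)) *
    (pE (k-1) (a-x/2) * pE (k-1) (a+x/2))

lemma pE_succ (m : ℕ) (z : ℂ) : pE (m+1) z = pE m z * (z + m) := by
  simp [pE, ascPochhammer_succ_eval]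

lemma pE_succ_left (m : ℕ) (z : ℂ) : pE (m+1) z = z * pE m (z+1) := by
  rw [pE, pE, ascPochhammer_succ_left, Polynomial.eval_mul, Polynomial.eval_X,
    Polynomial.eval_comp, Polynomial.eval_add, Polynomial.eval_X, Polynomial.eval_one]

lemma pE_zero (z : ℂ) : pE 0 z = 1 := by simp [pE]

lemma pE_factor (k m : ℕ) (z : ℂ) : pE (k+m) z = pE k z * pE m (z + k) := by
  rw [pE, pE, pE, ← ascPochhammer_mul, Polynomial.eval_mul, Polynomial.eval_comp]
  simp

lemma pE_ne {n k : ℕ} {z : ℂ} (hk : k ≤ n) (h : pE n z ≠ 0) : pE k z ≠ 0 := by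
  obtain ⟨m, rfl⟩ := Nat.exists_eq_add_of_le hk
  rw [pE_factor] at h
  exact left_ne_zero_of_mul h

lemma cW_top (n : ℕ) (a b c d : ℂ) : cW n a b c d (n+1) = 0 := by
  have h : pE (n+1) (-(n:ℂ)) = 0 := by
    rw [pE_succ, show -(n:ℂ) + n = 0 from by ring, mul_zero]
  rw [cW, h, zero_mul, zero_div]

lemma cW_zero (n : ℕ) (a b c d : ℂ) : cW n a b c d 0 = 1 := by
  simp [cW, pE_zero]

lemma relC (n : ℕ) (a b c d : ℂ) (k : ℕ) (hk : k ≤ n)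
    (hab : pE n (a+b) ≠ 0) (hac : pE n (a+c) ≠ 0) (had : pE n (a+d) ≠ 0) :
    cW n a b c d (k+1) * (((k:ℂ)+1)*(a+b+k)*(a+c+k)*(a+d+k))
      = cW n a b c d k * (((k:ℂ)-n)*((k:ℂ)+n+a+b+c+d-1)) := by
  rcases eq_or_lt_of_le hk with rfl | hlt
  · rw [cW_top, zero_mul, show (k:ℂ)-k = 0 from by ring]
    ring
  · have hk1 : k + 1 ≤ n := hlt
    have h1 : pE k (a+b) ≠ 0 := pE_ne hk hab
    have h2 : pE k (a+c) ≠ 0 := pE_ne hk hac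
    have h3 : pE k (a+d) ≠ 0 := pE_ne hk had
    have h4 : pE (k+1) (a+b) ≠ 0 := pE_ne hk1 hab
    have h5 : pE (k+1) (a+c) ≠ 0 := pE_ne hk1 hac
    have h6 : pE (k+1) (a+d) ≠ 0 := pE_ne hk1 had
    have hf : ((Nat.factorial k : ℂ)) ≠ 0 :=
      Nat.cast_ne_zero.mpr (Nat.factorial_ne_zero k)
    have hDk : pE k (a+b) * pE k (a+c) * pE k (a+d) * (Nat.factorial k : ℂ) ≠ 0 :=
      mul_ne_zero (mul_ne_zero (mul_ne_zero h1 h2) h3) hf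
    have hDk1 : pE (k+1) (a+b) * pE (k+1) (a+c) * pE (k+1) (a+d)
        * (Nat.factorial (k+1) : ℂ) ≠ 0 := by
      refine mul_ne_zero (mul_ne_zero (mul_ne_zero h4 h5) h6) ?_
      exact Nat.cast_ne_zero.mpr (Nat.factorial_ne_zero (k+1))
    rw [cW, cW, div_mul_eq_mul_div, div_mul_eq_mul_div, div_eq_div_iff hDk1 hDk]
    rw [pE_succ k (-(n:ℂ)), pE_succ k ((n:ℂ) + a + b + c + d - 1), pE_succ k (a+b),
      pE_succ k (a+c), pE_succ k (a+d), Nat.factorial_succ]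
    push_cast
    ring

lemma prod_eq (a x : ℂ) (k : ℕ) :
    (∏ j ∈ Finset.range k, ((a + (j:ℂ))^2 - x^2/4)) = pE k (a - x/2) * pE k (a + x/2) := by
  induction k with
  | zero => simp [pE_zero]
  | succ m ih => rw [Finset.prod_range_succ, ih, pE_succ, pE_succ]; ring

lemma wilsonT_eq (n : ℕ) (a b c d x : ℂ) :
    wilsonT n a b c d x = pE n (a+b) * pE n (a+c) * pE n (a+d) *
      ∑ k ∈ Finset.range (n+1), cW n a b c d k * (pE k (a - x/2) * pE k (a + x/2)) := by
  rw [wilsonT]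
  congr 1
  refine Finset.sum_congr rfl fun k _ => ?_
  rw [show cW n a b c d k * (pE k (a - x/2) * pE k (a + x/2))
      = cW n a b c d k * ∏ j ∈ Finset.range k, ((a + (j:ℂ))^2 - x^2/4) from by
    rw [prod_eq]]
  rfl

lemma keyId (a b c d t : ℂ) (m : ℕ) :
    16*(a+t)*(b+t)*(c+t)*(d+t)*(2*t-1)
      * (pE (m+1) (a-t-1) * pE (m+1) (a+t+1) - pE (m+1) (a-t) * pE (m+1) (a+t))
    + 16*(a-t)*(b-t)*(c-t)*(d-t)*(2*t+1)
      * (pE (m+1) (a-t+1) * pE (m+1) (a+t-1) - pE (m+1) (a-t) * pE (m+1) (a+t))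
    = 32*t*(2*t+1)*(2*t-1) *
        (((m:ℂ)+1)*((m:ℂ)+a+b+c+d) * (pE (m+1) (a-t) * pE (m+1) (a+t))
          - ((m:ℂ)+1)*(a+b+m)*(a+c+m)*(a+d+m) * (pE m (a-t) * pE m (a+t))) := by
  have h1 : pE (m+1) (a-t-1) = (a-t-1) * pE m (a-t) := by
    rw [pE_succ_left, show a-t-1+1 = a-t from by ring]
  have h2 : pE (m+1) (a+t+1) = pE m (a+t+1) * (a+t+1+m) := pE_succ m _
  have h3 : pE (m+1) (a-t) = pE m (a-t) * (a-t+m) := pE_succ m _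
  have h4 : pE (m+1) (a+t) = (a+t) * pE m (a+t+1) := pE_succ_left m _
  have h5 : pE (m+1) (a-t+1) = pE m (a-t+1) * (a-t+1+m) := pE_succ m _
  have h6 : pE (m+1) (a+t-1) = (a+t-1) * pE m (a+t) := by
    rw [pE_succ_left, show a+t-1+1 = a+t from by ring]
  have hs1 : pE m (a-t) * (a-t+m) = (a-t) * pE m (a-t+1) := by
    rw [← pE_succ, pE_succ_left]
  have hs2 : pE m (a+t) * (a+t+m) = (a+t) * pE m (a+t+1) := by
    rw [← pE_succ, pE_succ_left]
  rw [h1, h2, h3, h4, h5, h6]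
  linear_combination
    (-16*(b-t)*(c-t)*(d-t)*(2*t+1)*(a-t+(m:ℂ)+1)*(a+t-1) * pE m (a+t)) * hs1
    + ((-16*(b+t)*(c+t)*(d+t)*(2*t-1)*((a-t-1)*(a+t+(m:ℂ)+1)-(a-t+(m:ℂ))*(a+t))
        + 16*(a-t)*(b-t)*(c-t)*(d-t)*(2*t+1)*(a-t+(m:ℂ))
        + 32*t*(2*t+1)*(2*t-1)*((m:ℂ)+1)*((m:ℂ)+a+b+c+d)*(a-t+(m:ℂ))) * pE m (a-t)) * hs2

lemma lemMu (a b c d : ℂ) (f : ℂ → ℂ) (x : ℂ) :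
    opMu a b c d f x
      = ((x+2*a-1)*(x+2*b-1) * f (x+1) - (x-2*a+1)*(x-2*b+1) * f (x-1)) / (4*x) := by
  simp only [opMu, opL, opM1, opM2, mul_div_assoc']
  rw [← add_div, ← add_div]
  exact congrArg (· / (4*x)) (by ring)

set_option maxHeartbeats 1000000 in
lemma lemQ (a b c d : ℂ) (f : ℂ → ℂ) (x : ℂ) (h0 : x ≠ 0) (h1 : x - 1 ≠ 0)
    (h2 : x + 1 ≠ 0) :
    16*x*(x+1)*(x-1) * opMuStar a b c d (opMu a b c d f) x
      = 16*(a+x/2)*(b+x/2)*(c+x/2)*(d+x/2)*(x-1) * (f (x+2) - f x)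
          + 16*(a-x/2)*(b-x/2)*(c-x/2)*(d-x/2)*(x+1) * (f (x-2) - f x)
        + 16*x*(x+1)*(x-1) * ((c+d)*(a+b-1)) * f x := by
  rw [opMuStar, lemMu, lemMu, lemMu]
  rw [show x+1+1 = x+2 from by ring, show x+1-1 = x from by ring,
    show x-1+1 = x from by ring, show x-1-1 = x-2 from by ring]
  field_simp
  ring

set_option maxHeartbeats 1000000 in
lemma lemW (a b c d : ℂ) (n : ℕ) (x : ℂ) :
    16*(a+x/2)*(b+x/2)*(c+x/2)*(d+x/2)*(x-1)
        * (wilsonT n a b c d (x+2) - wilsonT n a b c d x)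
      + 16*(a-x/2)*(b-x/2)*(c-x/2)*(d-x/2)*(x+1)
        * (wilsonT n a b c d (x-2) - wilsonT n a b c d x)
      = 16*x*(x+1)*(x-1) * ((n:ℂ)*((n:ℂ)+a+b+c+d-1)) * wilsonT n a b c d x := by
  rw [wilsonT_eq n a b c d (x+2), wilsonT_eq n a b c d (x-2), wilsonT_eq n a b c d x]
  rw [show a - (x+2)/2 = a - x/2 - 1 from by ring,
      show a + (x+2)/2 = a + x/2 + 1 from by ring,
      show a - (x-2)/2 = a - x/2 + 1 from by ring,
      show a + (x-2)/2 = a + x/2 - 1 from by ring]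
  by_cases hD : pE n (a+b) * pE n (a+c) * pE n (a+d) = 0
  · rw [hD]
    ring
  · simp only [mul_eq_zero, not_or] at hD
    obtain ⟨⟨hab, hac⟩, had⟩ := hD
    suffices key :
        16*(a+x/2)*(b+x/2)*(c+x/2)*(d+x/2)*(x-1)
            * ((∑ k ∈ Finset.range (n+1), cW n a b c d k
                  * (pE k (a-x/2-1) * pE k (a+x/2+1)))
               - ∑ k ∈ Finset.range (n+1), cW n a b c d k
                  * (pE k (a-x/2) * pE k (a+x/2)))
          + 16*(a-x/2)*(b-x/2)*(c-x/2)*(d-x/2)*(x+1)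
            * ((∑ k ∈ Finset.range (n+1), cW n a b c d k
                  * (pE k (a-x/2+1) * pE k (a+x/2-1)))
               - ∑ k ∈ Finset.range (n+1), cW n a b c d k
                  * (pE k (a-x/2) * pE k (a+x/2)))
          = 16*x*(x+1)*(x-1) * ((n:ℂ)*((n:ℂ)+a+b+c+d-1))
              * ∑ k ∈ Finset.range (n+1), cW n a b c d k
                  * (pE k (a-x/2) * pE k (a+x/2)) by
      linear_combination (pE n (a+b) * pE n (a+c) * pE n (a+d)) * key
    have hstep : ∀ k ∈ Finset.range (n+1),
        16*(a+x/2)*(b+x/2)*(c+x/2)*(d+x/2)*(x-1)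
            * (cW n a b c d k * (pE k (a-x/2-1) * pE k (a+x/2+1))
               - cW n a b c d k * (pE k (a-x/2) * pE k (a+x/2)))
          + 16*(a-x/2)*(b-x/2)*(c-x/2)*(d-x/2)*(x+1)
            * (cW n a b c d k * (pE k (a-x/2+1) * pE k (a+x/2-1))
               - cW n a b c d k * (pE k (a-x/2) * pE k (a+x/2)))
          - 16*x*(x+1)*(x-1) * ((n:ℂ)*((n:ℂ)+a+b+c+d-1))
            * (cW n a b c d k * (pE k (a-x/2) * pE k (a+x/2)))
        = VW n a b c d x k - VW n a b c d x (k+1) := by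
      intro k hk
      have hkn : k ≤ n := Nat.lt_succ_iff.mp (Finset.mem_range.mp hk)
      have hrel := relC n a b c d k hkn hab hac had
      cases k with
      | zero =>
        simp only [VW, pE_zero, cW_zero, Nat.cast_zero, Nat.cast_one,
          show (1:ℕ)-1 = 0 from rfl] at hrel ⊢
        linear_combination (-(16*x*(x+1)*(x-1))) * hrel
      | succ m =>
        have hkey := keyId a b c d (x/2) m
        have hm1 : (m + 1) - 1 = m := rfl
        have hm2 : (m + 1 + 1) - 1 = m + 1 := rfl
        simp only [VW, hm1, hm2]
        push_cast at hrel ⊢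
        linear_combination (cW n a b c d (m+1)) * hkey
          - (16*x*(x+1)*(x-1) * (pE (m+1) (a-x/2) * pE (m+1) (a+x/2))) * hrel
    have tel : ∑ k ∈ Finset.range (n+1), (VW n a b c d x k - VW n a b c d x (k+1))
        = VW n a b c d x 0 - VW n a b c d x (n+1) :=
      Finset.sum_range_sub' (VW n a b c d x) (n+1)
    have hV0 : VW n a b c d x 0 = 0 := by simp [VW]
    have hVn1 : VW n a b c d x (n+1) = 0 := by simp [VW, cW_top]
    have e2 : ∑ k ∈ Finset.range (n+1),
        (16*(a+x/2)*(b+x/2)*(c+x/2)*(d+x/2)*(x-1)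
            * (cW n a b c d k * (pE k (a-x/2-1) * pE k (a+x/2+1))
               - cW n a b c d k * (pE k (a-x/2) * pE k (a+x/2)))
          + 16*(a-x/2)*(b-x/2)*(c-x/2)*(d-x/2)*(x+1)
            * (cW n a b c d k * (pE k (a-x/2+1) * pE k (a+x/2-1))
               - cW n a b c d k * (pE k (a-x/2) * pE k (a+x/2)))
          - 16*x*(x+1)*(x-1) * ((n:ℂ)*((n:ℂ)+a+b+c+d-1))
            * (cW n a b c d k * (pE k (a-x/2) * pE k (a+x/2)))) = 0 := by
      rw [Finset.sum_congr rfl hstep, tel, hV0, hVn1, sub_zero]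
    simp only [Finset.sum_sub_distrib, Finset.sum_add_distrib, ← Finset.mul_sum] at e2
    linear_combination e2

/-- the rescaled Wilson polynomials are eigenfunctions of
Q = μ*^{(a,b,c,d)}μ^{(a,b,c,d)} with eigenvalue
n(n+a+b+c+d−1) + (c+d)(a+b−1). -/
theorem stmt10 (a b c d : ℂ) (n : ℕ) :
    ∀ x : ℂ, x * (x - 1) * (x + 1) ≠ 0 →
      opMuStar a b c d (opMu a b c d (wilsonT n a b c d)) x
        = ((n : ℂ) * ((n : ℂ) + a + b + c + d - 1) + (c + d) * (a + b - 1))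
            * wilsonT n a b c d x := by
  intro x hx
  have h0 : x ≠ 0 := fun h => hx (by rw [h]; ring)
  have h1 : x - 1 ≠ 0 := fun h => hx (by
    rw [show x = 1 from by linear_combination h]; ring)
  have h2 : x + 1 ≠ 0 := fun h => hx (by
    rw [show x = -1 from by linear_combination h]; ring)
  have h16 : (16:ℂ)*x*(x+1)*(x-1) ≠ 0 := by
    refine mul_ne_zero (mul_ne_zero (mul_ne_zero ?_ h0) h2) h1
    norm_num
  apply mul_left_cancel₀ h16
  rw [show (16:ℂ)*x*(x+1)*(x-1) = 16*x*(x+1)*(x-1) from rfl]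
  rw [lemQ a b c d (wilsonT n a b c d) x h0 h1 h2]
  linear_combination lemW a b c d n x
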